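/- Let λ ∈ ℝ and δ > 0, and let u : ℝ → ℝ be twice continuously differentiable on [0, δ) with u(0) = 0 and u'(0) = 0. Suppose that for every r ∈ (0, δ): u'(r)·u''(r) = r·(1 + u'(r)²)²·(1/√(1 + u'(r)²) + λ). Then u''(0)² = 1 + λ. -/

import Mathlib

/-- If `u` is `C²` on `[0, δ)` with `u(0) = u'(0) = 0` and satisfies
`u' u'' = r (1 + u'²)² (1/√(1 + u'²) + λ)` on `(0, δ)`, then `u''(0)² = 1 + λ`. -/
theorem rotational_translator_second_derivative_at_axis
    (lam δ : ℝ) (hδ : 0 < δ) (u u' u'' : ℝ → ℝ)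
    (hu : ∀ r ∈ Set.Ico (0 : ℝ) δ, HasDerivWithinAt u (u' r) (Set.Ico (0 : ℝ) δ) r)
    (hu' : ∀ r ∈ Set.Ico (0 : ℝ) δ, HasDerivWithinAt u' (u'' r) (Set.Ico (0 : ℝ) δ) r)
    (hcont : ContinuousOn u'' (Set.Ico (0 : ℝ) δ))
    (h0 : u 0 = 0) (h1 : u' 0 = 0)
    (heq : ∀ r ∈ Set.Ioo (0 : ℝ) δ,
      u' r * u'' r =
        r * (1 + u' r ^ 2) ^ 2 * (1 / Real.sqrt (1 + u' r ^ 2) + lam)) :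
    u'' 0 ^ 2 = 1 + lam := by
  have h0mem : (0 : ℝ) ∈ Set.Ico (0 : ℝ) δ := ⟨le_refl 0, hδ⟩
  set F : Filter ℝ := nhdsWithin 0 (Set.Ioo (0 : ℝ) δ) with hF
  have hsub : Set.Ioo (0 : ℝ) δ ⊆ Set.Ico 0 δ \ {0} := by
    intro x hx
    exact ⟨⟨hx.1.le, hx.2⟩, ne_of_gt hx.1⟩
  have hsub' : Set.Ioo (0 : ℝ) δ ⊆ Set.Ico 0 δ := fun x hx => ⟨hx.1.le, hx.2⟩
  have hNeBot : F.NeBot := by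
    rw [hF, ← mem_closure_iff_nhdsWithin_neBot, closure_Ioo hδ.ne]
    exact ⟨le_refl 0, hδ.le⟩
  -- slope tendsto
  have hslope : Filter.Tendsto (fun r => u' r / r) F (nhds (u'' 0)) := by
    have h := hasDerivWithinAt_iff_tendsto_slope.mp (hu' 0 h0mem)
    have h' := h.mono_left (nhdsWithin_mono 0 hsub)
    refine h'.congr' ?_
    filter_upwards [self_mem_nhdsWithin] with r hr
    simp [slope, h1, div_eq_inv_mul]
  have hu'c : Filter.Tendsto u' F (nhds 0) := by
    have := (hu' 0 h0mem).continuousWithinAt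
    rw [ContinuousWithinAt, h1] at this
    exact this.mono_left (nhdsWithin_mono 0 hsub')
  have hu''c : Filter.Tendsto u'' F (nhds (u'' 0)) :=
    (hcont 0 h0mem).mono_left (nhdsWithin_mono 0 hsub')
  have hLHS : Filter.Tendsto (fun r => u' r / r * u'' r) F (nhds (u'' 0 ^ 2)) := by
    have := hslope.mul hu''c
    simpa [sq] using this
  have hA : Filter.Tendsto (fun r => 1 + u' r ^ 2) F (nhds 1) := by
    have := (tendsto_const_nhds : Filter.Tendsto (fun _ : ℝ => (1:ℝ)) F (nhds 1)).add (hu'c.pow 2)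
    simpa using this
  have hS : Filter.Tendsto (fun r => Real.sqrt (1 + u' r ^ 2)) F (nhds 1) := by
    have := (Real.continuous_sqrt.tendsto 1).comp hA
    simpa [Function.comp_def] using this
  have hRHS : Filter.Tendsto
      (fun r => (1 + u' r ^ 2) ^ 2 * (1 / Real.sqrt (1 + u' r ^ 2) + lam)) F
      (nhds (1 + lam)) := by
    have := (hA.pow 2).mul (((tendsto_const_nhds :
        Filter.Tendsto (fun _ : ℝ => (1:ℝ)) F (nhds 1)).div hS one_ne_zero).add
      (tendsto_const_nhds : Filter.Tendsto (fun _ : ℝ => lam) F (nhds lam)))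
    simpa using this
  have hEq : Filter.Tendsto (fun r => u' r / r * u'' r) F (nhds (1 + lam)) := by
    refine hRHS.congr' ?_
    filter_upwards [self_mem_nhdsWithin] with r hr
    have hrne : r ≠ 0 := ne_of_gt hr.1
    rw [div_mul_eq_mul_div, heq r hr, mul_assoc, mul_div_cancel_left₀ _ hrne]
  exact tendsto_nhds_unique hLHS hEq
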